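/- arXiv:2404.05992 — 3 statements merged into one kernel-verified Lean document; each statement's English description precedes it below -/
import Mathlib

section
/- Let G be a finite simple graph and let {(T_i,β_i)}_{i∈[k]} be a non-edge-separating family of k tree-decompositions of G. Then G has a complete k'-tree-median-decomposition for some k' ≤ k; in particular, tmd(G) ≤ k. -/
open SimpleGraph

/-- A graph is chordal if it contains no hole, i.e. no induced cycle of length at least four. -/
def Chordal {V : Type} (G : SimpleGraph V) : Prop :=
  ∀ n : ℕ, 4 ≤ n → IsEmpty (SimpleGraph.cycleGraph n ↪g G)

/-- `(T, β)` is a tree-decomposition of `G`. -/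
structure IsTreeDecomp {V B : Type} (G : SimpleGraph V) (T : SimpleGraph B) (β : B → Set V) :
    Prop where
  isTree : T.IsTree
  exists_bag : ∀ v : V, ∃ t, v ∈ β t
  adj_bag : ∀ ⦃u v : V⦄, G.Adj u v → ∃ t, u ∈ β t ∧ v ∈ β t
  support_connected : ∀ v : V, (T.induce {t | v ∈ β t}).Connected

/-- The chordality of `G`. -/
noncomputable def chor {V : Type} [Fintype V] (G : SimpleGraph V) : ℕ :=
  sInf {k | 0 < k ∧ ∃ H : Fin k → SimpleGraph V, (∀ i, Chordal (H i)) ∧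
    ∀ u v : V, G.Adj u v ↔ ∀ i, (H i).Adj u v}

/-- The Cartesian (box) product of a family of graphs. -/
def boxProdPi {ι : Type} {B : ι → Type} (T : ∀ i, SimpleGraph (B i)) :
    SimpleGraph (∀ i, B i) where
  Adj x y := ∃ i, (T i).Adj (x i) (y i) ∧ ∀ j, j ≠ i → x j = y j
  symm := by
    constructor
    rintro x y ⟨i, h, hj⟩
    exact ⟨i, h.symm, fun j hji => (hj j hji).symm⟩
  loopless := by
    constructor
    rintro x ⟨i, h, -⟩
    exact SimpleGraph.irrefl _ h

/-- The geodesic interval `I(u,v)` of a graph. -/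
def geoInterval {V : Type} (G : SimpleGraph V) (u v : V) : Set V :=
  {x | G.dist u v = G.dist u x + G.dist x v}

/-- A set of vertices is (geodesically) convex. -/
def GeoConvex {V : Type} (G : SimpleGraph V) (S : Set V) : Prop :=
  ∀ u ∈ S, ∀ v ∈ S, geoInterval G u v ⊆ S

/-- A median graph. -/
def MedianGraph {V : Type} (M : SimpleGraph V) : Prop :=
  M.Connected ∧ ∀ u v w : V,
    ∃! x, x ∈ geoInterval M u v ∩ geoInterval M u w ∩ geoInterval M v w

/-- `φ` is an isometric embedding of `G` into `H`. -/
def IsIsometricEmbedding {V W : Type} (G : SimpleGraph V) (H : SimpleGraph W)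
    (φ : V → W) : Prop :=
  ∀ u v : V, H.dist (φ u) (φ v) = G.dist u v

/-- `M` has tree-dimension at most `k`. -/
def TreeDimLE {V : Type} (M : SimpleGraph V) (k : ℕ) : Prop :=
  ∃ (B : Fin k → Type) (_ : ∀ i, Fintype (B i)) (T : ∀ i, SimpleGraph (B i)),
    (∀ i, (T i).IsTree) ∧
    ∃ φ : V → (∀ i, B i), IsIsometricEmbedding M (boxProdPi T) φ

/-- `G` has a complete `k`-tree-median-decomposition. -/
def HasCompleteTMD {V : Type} (G : SimpleGraph V) (k : ℕ) : Prop :=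
  ∃ (X : Type) (_ : Fintype X) (M : SimpleGraph X) (γ : X → Set V),
    MedianGraph M ∧ TreeDimLE M k ∧
    (∀ v : V, ({x : X | v ∈ γ x}).Nonempty ∧ GeoConvex M {x : X | v ∈ γ x}) ∧
    (∀ ⦃u v : V⦄, G.Adj u v → ({x : X | u ∈ γ x} ∩ {x : X | v ∈ γ x}).Nonempty) ∧
    (∀ x : X, G.IsClique (γ x))

/-- The tree-median-dimension of `G`. -/
noncomputable def tmd {V : Type} [Fintype V] (G : SimpleGraph V) : ℕ :=
  sInf {k | 0 < k ∧ HasCompleteTMD G k}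

/-- `T` is a path graph. -/
def IsPathGraph {B : Type} (T : SimpleGraph B) : Prop :=
  ∃ n : ℕ, Nonempty (T ≃g SimpleGraph.pathGraph n)

/-- A graph is an interval graph if it can be represented by nonempty closed
intervals of the real line. -/
def IntervalGraph {V : Type} (G : SimpleGraph V) : Prop :=
  ∃ I : V → Set ℝ, (∀ v, ∃ a b : ℝ, a ≤ b ∧ I v = Set.Icc a b) ∧
    ∀ u v : V, u ≠ v → (G.Adj u v ↔ (I u ∩ I v).Nonempty)

/-- `(T, β)` is a representation of the chordal graph `H`. -/
structure IsRepresentation {V B : Type} (H : SimpleGraph V) (T : SimpleGraph B)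
    (β : B → Set V) : Prop where
  isTree : T.IsTree
  support_connected : ∀ v : V, (T.induce {t | v ∈ β t}).Connected
  adj_iff : ∀ u v : V, u ≠ v →
    (H.Adj u v ↔ ({t : B | u ∈ β t} ∩ {t : B | v ∈ β t}).Nonempty)

/-- `G` has path-width at most `k`. -/
def PathwidthLE {V : Type} (G : SimpleGraph V) (k : ℕ) : Prop :=
  ∃ (B : Type) (_ : Fintype B) (P : SimpleGraph B) (β : B → Set V),
    IsPathGraph P ∧ IsTreeDecomp G P β ∧ ∀ t : B, (β t).ncard ≤ k + 1

/-- The radius of `T` is at most `k`. -/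
def RadiusLE {B : Type} (T : SimpleGraph B) (k : ℕ) : Prop :=
  ∃ r : B, ∀ t : B, T.dist r t ≤ k

/-- The lexicographic product of two graphs. -/
def lexProd {V W : Type} (G : SimpleGraph V) (H : SimpleGraph W) :
    SimpleGraph (V × W) where
  Adj x y := G.Adj x.1 y.1 ∨ (x.1 = y.1 ∧ H.Adj x.2 y.2)
  symm := by
    constructor
    rintro x y (h | ⟨h1, h2⟩)
    · exact Or.inl h.symm
    · exact Or.inr ⟨h1.symm, h2.symm⟩
  loopless := by
    constructor
    rintro x (h | ⟨-, h⟩) <;> exact SimpleGraph.irrefl _ h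

namespace TMD6
set_option linter.unusedSectionVars false

section Trees

variable {A : Type} {T : SimpleGraph A}

lemma length_takeUntil_add {u v x : A} [DecidableEq A] (p : T.Walk u v) (hx : x ∈ p.support) :
    (p.takeUntil x hx).length + (p.dropUntil x hx).length = p.length := by
  have := congrArg Walk.length (p.take_spec hx)
  rwa [Walk.length_append] at this

lemma isPath_of_length_le_dist (hc : T.Connected) {u v : A} (w : T.Walk u v)
    (hw : w.length ≤ T.dist u v) : w.IsPath := by
  classical
  induction w with
  | nil => exact Walk.IsPath.nil
  | @cons u a v h w ih =>
    have htri : T.dist u v ≤ T.dist u a + T.dist a v := hc.dist_triangle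
    have hda : T.dist u a ≤ 1 := by simpa using T.dist_le h.toWalk
    have hwl : w.length + 1 ≤ T.dist u v := by simpa [Walk.length_cons] using hw
    have hw' : w.length ≤ T.dist a v := by omega
    refine (ih hw').cons ?_
    intro hu
    have hdrop := T.dist_le (w.dropUntil u hu)
    have hadd := length_takeUntil_add w hu
    have htpos : 1 ≤ (w.takeUntil u hu).length := by
      rcases Nat.eq_zero_or_pos (w.takeUntil u hu).length with h0 | h1
      · exact absurd (Walk.eq_of_length_eq_zero h0) h.ne'
      · exact h1
    omega

lemma path_length_eq_dist (ht : T.IsTree) {u v : A} {p : T.Walk u v} (hp : p.IsPath) :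
    p.length = T.dist u v := by
  obtain ⟨w, hw⟩ := ht.isConnected.exists_walk_length_eq_dist u v
  have hwp : w.IsPath := isPath_of_length_le_dist ht.isConnected w (le_of_eq hw)
  have heq : (⟨p, hp⟩ : T.Path u v) = ⟨w, hwp⟩ := ht.IsAcyclic.path_unique _ _
  rw [show p = w from congrArg Subtype.val heq, hw]

lemma geodesic_split (hc : T.Connected) {u v x : A} [DecidableEq A] {p : T.Walk u v}
    (hgeo : p.length = T.dist u v) (hx : x ∈ p.support) :
    T.dist u x = (p.takeUntil x hx).length ∧ T.dist x v = (p.dropUntil x hx).length := by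
  have h1 := T.dist_le (p.takeUntil x hx)
  have h2 := T.dist_le (p.dropUntil x hx)
  have h3 := length_takeUntil_add p hx
  have h4 : T.dist u v ≤ T.dist u x + T.dist x v := hc.dist_triangle
  omega

lemma mem_interval_of_mem_geodesic (hc : T.Connected) {u v x : A} {p : T.Walk u v}
    (hgeo : p.length = T.dist u v) (hx : x ∈ p.support) : x ∈ geoInterval T u v := by
  classical
  obtain ⟨e1, e2⟩ := geodesic_split hc hgeo hx
  have h3 := length_takeUntil_add p hx
  show T.dist u v = T.dist u x + T.dist x v
  omega

lemma mem_support_of_mem_interval (ht : T.IsTree) {u v x : A}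
    (hx : x ∈ geoInterval T u v) {p : T.Walk u v} (hp : p.IsPath) : x ∈ p.support := by
  have hx' : T.dist u v = T.dist u x + T.dist x v := hx
  obtain ⟨w1, hw1⟩ := ht.isConnected.exists_walk_length_eq_dist u x
  obtain ⟨w2, hw2⟩ := ht.isConnected.exists_walk_length_eq_dist x v
  have hlen : (w1.append w2).length = T.dist u v := by
    rw [Walk.length_append, hw1, hw2]; exact hx'.symm
  have hwp : (w1.append w2).IsPath := isPath_of_length_le_dist ht.isConnected _ (le_of_eq hlen)
  have heq : (⟨p, hp⟩ : T.Path u v) = ⟨_, hwp⟩ := ht.IsAcyclic.path_unique _ _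
  rw [show p = w1.append w2 from congrArg Subtype.val heq]
  exact (Walk.mem_support_append_iff _ _).2 (Or.inl w1.end_mem_support)

lemma tree_median_unique (ht : T.IsTree) {u v w x y : A}
    (hx : x ∈ geoInterval T u v ∩ geoInterval T u w ∩ geoInterval T v w)
    (hy : y ∈ geoInterval T u v ∩ geoInterval T u w ∩ geoInterval T v w) : x = y := by
  classical
  have hc := ht.isConnected
  obtain ⟨⟨hx1, hx2⟩, hx3⟩ := hx
  obtain ⟨⟨hy1, hy2⟩, hy3⟩ := hy
  have hx1' : T.dist u v = T.dist u x + T.dist x v := hx1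
  have hx2' : T.dist u w = T.dist u x + T.dist x w := hx2
  have hx3' : T.dist v w = T.dist v x + T.dist x w := hx3
  have hy1' : T.dist u v = T.dist u y + T.dist y v := hy1
  have hy2' : T.dist u w = T.dist u y + T.dist y w := hy2
  have hy3' : T.dist v w = T.dist v y + T.dist y w := hy3
  have hcx : T.dist v x = T.dist x v := T.dist_comm
  have hcy : T.dist v y = T.dist y v := T.dist_comm
  have hux : T.dist u x = T.dist u y := by omega
  have hxv : T.dist x v = T.dist y v := by omega
  -- take a geodesic path from u to v; x and y both lie on it
  obtain ⟨p, hplen⟩ := hc.exists_walk_length_eq_dist u v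
  have hp : p.IsPath := isPath_of_length_le_dist hc p (le_of_eq hplen)
  have hxp : x ∈ p.support := mem_support_of_mem_interval ht hx1 hp
  have hyp : y ∈ p.support := mem_support_of_mem_interval ht hy1 hp
  have hsplit := geodesic_split hc hplen hxp
  have hyq : y ∈ (p.takeUntil x hxp).support ∨ y ∈ (p.dropUntil x hxp).support := by
    rw [← Walk.mem_support_append_iff, p.take_spec hxp]; exact hyp
  rcases hyq with hyq | hyq
  · have := mem_interval_of_mem_geodesic hc hsplit.1.symm hyq
    have h5 : T.dist u x = T.dist u y + T.dist y x := this
    have h6 : T.dist y x = 0 := by omega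
    exact (hc.dist_eq_zero_iff.mp h6).symm
  · have := mem_interval_of_mem_geodesic hc hsplit.2.symm hyq
    have h5 : T.dist x v = T.dist x y + T.dist y v := this
    have h6 : T.dist x y = 0 := by omega
    exact hc.dist_eq_zero_iff.mp h6

lemma tree_median (ht : T.IsTree) (u v w : A) :
    ∃! m, m ∈ geoInterval T u v ∩ geoInterval T u w ∩ geoInterval T v w := by
  classical
  have hc := ht.isConnected
  obtain ⟨p, hplen⟩ := hc.exists_walk_length_eq_dist u v
  have hp : p.IsPath := isPath_of_length_le_dist hc p (le_of_eq hplen)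
  obtain ⟨q, hqlen⟩ := hc.exists_walk_length_eq_dist u w
  have hq : q.IsPath := isPath_of_length_le_dist hc q (le_of_eq hqlen)
  set s : Finset A := p.support.toFinset ∩ q.support.toFinset with hs
  have hsne : s.Nonempty := ⟨u, by simp [hs, Walk.start_mem_support]⟩
  obtain ⟨m, hms, hmax⟩ := s.exists_max_image (fun z => T.dist u z) hsne
  have hmp : m ∈ p.support := by simpa [hs] using (Finset.mem_inter.mp hms).1
  have hmq : m ∈ q.support := by simpa [hs] using (Finset.mem_inter.mp hms).2
  have hIuv : m ∈ geoInterval T u v := mem_interval_of_mem_geodesic hc hplen hmp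
  have hIuw : m ∈ geoInterval T u w := mem_interval_of_mem_geodesic hc hqlen hmq
  have hpsplit := geodesic_split hc hplen hmp
  have hqsplit := geodesic_split hc hqlen hmq
  set dp := p.dropUntil m hmp with hdp
  set dq := q.dropUntil m hmq with hdq
  -- any common vertex of dp and dq equals m
  have hkey : ∀ z, z ∈ dp.support → z ∈ dq.support → z = m := by
    intro z hzp hzq
    by_contra hzm
    have hzp' : z ∈ p.support := p.support_dropUntil_subset hmp hzp
    have hzq' : z ∈ q.support := q.support_dropUntil_subset hmq hzq
    have hzs : z ∈ s := by simp [hs, hzp', hzq']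
    have hle : T.dist u z ≤ T.dist u m := hmax z hzs
    have hz1 : T.dist u v = T.dist u z + T.dist z v :=
      mem_interval_of_mem_geodesic hc hplen hzp'
    have hz2 : T.dist m v = T.dist m z + T.dist z v :=
      mem_interval_of_mem_geodesic hc hpsplit.2.symm hzp
    have hm1 : T.dist u v = T.dist u m + T.dist m v := hIuv
    have hpos : 0 < T.dist m z := hc.pos_dist_of_ne (fun h => hzm h.symm)
    omega
  -- build the path from v to w through m
  have hdppath : dp.IsPath := hp.dropUntil hmp
  have hdqpath : dq.IsPath := hq.dropUntil hmq
  have hcpath : (dp.reverse.append dq).IsPath := by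
    rw [Walk.isPath_def, Walk.support_append, Walk.support_reverse]
    refine List.Nodup.append ?_ ?_ ?_
    · exact (List.nodup_reverse).mpr hdppath.support_nodup
    · exact hdqpath.support_nodup.tail
    · intro z hz1 hz2
      have hz1' : z ∈ dp.support := (List.mem_reverse).mp hz1
      have hz2' : z ∈ dq.support := List.mem_of_mem_tail hz2
      have : z = m := hkey z hz1' hz2'
      subst this
      have := hdqpath.support_nodup
      rw [dq.support_eq_cons] at this
      exact (List.nodup_cons.mp this).1 hz2
  have hclen : (dp.reverse.append dq).length = T.dist m v + T.dist m w := by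
    rw [Walk.length_append, Walk.length_reverse, ← hpsplit.2, ← hqsplit.2]
  have hIvw : m ∈ geoInterval T v w := by
    have := path_length_eq_dist ht hcpath
    show T.dist v w = T.dist v m + T.dist m w
    rw [← this, hclen]
    have : T.dist v m = T.dist m v := T.dist_comm
    omega
  exact ⟨m, ⟨⟨hIuv, hIuw⟩, hIvw⟩, fun y hy => tree_median_unique ht hy ⟨⟨hIuv, hIuw⟩, hIvw⟩⟩

lemma convex_of_induce_connected (ht : T.IsTree) {S : Set A}
    (hS : (T.induce S).Connected) : GeoConvex T S := by
  classical
  intro u hu v hv x hx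
  obtain ⟨w0⟩ := hS.preconnected ⟨u, hu⟩ ⟨v, hv⟩
  let w : T.Walk u v := w0.map (SimpleGraph.Embedding.induce S).toHom
  have hsub : ∀ z ∈ w.support, z ∈ S := by
    intro z hz
    rw [show w.support = _ from Walk.support_map _ _] at hz
    obtain ⟨z', _, rfl⟩ := List.mem_map.1 hz
    exact z'.2
  have hxs : x ∈ w.bypass.support :=
    mem_support_of_mem_interval ht hx w.bypass_isPath
  exact hsub x (w.support_bypass_subset hxs)


end Trees

section Products

variable {ι : Type} [Fintype ι] [DecidableEq ι] {B : ι → Type} {T : ∀ i, SimpleGraph (B i)}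

lemma boxProdPi_adj_update {x : ∀ i, B i} {i : ι} {a b : B i} (h : (T i).Adj a b) :
    (boxProdPi T).Adj (Function.update x i a) (Function.update x i b) :=
  ⟨i, by simpa using h, fun j hj => by simp [Function.update_of_ne hj]⟩

lemma exists_walk_update (x : ∀ i, B i) {i : ι} {a b : B i} (w : (T i).Walk a b) :
    ∃ W : (boxProdPi T).Walk (Function.update x i a) (Function.update x i b),
      W.length = w.length := by
  induction w with
  | nil => exact ⟨Walk.nil, rfl⟩
  | cons h w ih =>
    obtain ⟨W, hW⟩ := ih
    exact ⟨Walk.cons (boxProdPi_adj_update h) W, by simp [hW]⟩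

lemma exists_walk_le_sum (hT : ∀ i, (T i).Connected) (s : Finset ι) :
    ∀ x y : ∀ i, B i, (∀ i ∉ s, x i = y i) →
      ∃ W : (boxProdPi T).Walk x y, W.length ≤ ∑ i ∈ s, (T i).dist (x i) (y i) := by
  induction s using Finset.induction_on with
  | empty =>
    intro x y hxy
    have hxy' : x = y := funext fun i => hxy i (by simp)
    subst hxy'
    exact ⟨Walk.nil, by simp⟩
  | @insert i s hi ih =>
    intro x y hxy
    obtain ⟨w, hw⟩ := (hT i).exists_walk_length_eq_dist (x i) (y i)
    obtain ⟨W1, hW1⟩ := exists_walk_update x w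
    obtain ⟨W2, hW2⟩ := ih (Function.update x i (y i)) y (fun j hj => by
      by_cases hji : j = i
      · subst hji; simp
      · rw [Function.update_of_ne hji]
        exact hxy j (by simp [hji, hj]))
    refine ⟨(W1.copy (Function.update_eq_self i x) rfl).append W2, ?_⟩
    rw [Walk.length_append, Walk.length_copy, hW1, hw, Finset.sum_insert hi]
    have hsum : ∑ j ∈ s, (T j).dist (Function.update x i (y i) j) (y j)
        = ∑ j ∈ s, (T j).dist (x j) (y j) := by
      refine Finset.sum_congr rfl fun j hj => ?_
      rw [Function.update_of_ne (by rintro rfl; exact hi hj)]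
    omega
  -- fallback

lemma sum_dist_le_length (hT : ∀ i, (T i).Connected) {x y : ∀ i, B i}
    (W : (boxProdPi T).Walk x y) :
    ∑ i, (T i).dist (x i) (y i) ≤ W.length := by
  induction W with
  | nil => simp
  | @cons x z y h W ih =>
    obtain ⟨i0, hadj, heq⟩ := id h
    have h1 : ∑ i, (T i).dist (x i) (y i) ≤
        ∑ i, ((T i).dist (x i) (z i) + (T i).dist (z i) (y i)) :=
      Finset.sum_le_sum fun i _ => (hT i).dist_triangle
    rw [Finset.sum_add_distrib] at h1
    have h2 : ∑ i, (T i).dist (x i) (z i) = (T i0).dist (x i0) (z i0) := by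
      refine Finset.sum_eq_single i0 (fun j _ hj => ?_) (by simp)
      rw [heq j hj, SimpleGraph.dist_self]
    have h3 : (T i0).dist (x i0) (z i0) ≤ 1 := by simpa using (T i0).dist_le hadj.toWalk
    simp only [Walk.length_cons]
    omega

lemma boxProdPi_dist (hT : ∀ i, (T i).Connected) (x y : ∀ i, B i) :
    (boxProdPi T).dist x y = ∑ i, (T i).dist (x i) (y i) := by
  obtain ⟨W, hW⟩ := exists_walk_le_sum hT Finset.univ x y (fun i hi => absurd (Finset.mem_univ i) hi)
  refine le_antisymm (le_trans ((boxProdPi T).dist_le W) hW) ?_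
  obtain ⟨W0, hW0⟩ := SimpleGraph.Reachable.exists_walk_length_eq_dist (⟨W⟩ : (boxProdPi T).Reachable x y)
  rw [← hW0]
  exact sum_dist_le_length hT W0

lemma boxProdPi_connected (hT : ∀ i, (T i).Connected) : (boxProdPi T).Connected := by
  have hne : ∀ i, Nonempty (B i) := fun i => (hT i).nonempty
  rw [SimpleGraph.connected_iff]
  refine ⟨fun x y => ?_, ⟨fun i => Classical.arbitrary _⟩⟩
  obtain ⟨W, -⟩ := exists_walk_le_sum hT Finset.univ x y (fun i hi => absurd (Finset.mem_univ i) hi)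
  exact ⟨W⟩

lemma boxProdPi_interval (hT : ∀ i, (T i).Connected) {u v x : ∀ i, B i} :
    x ∈ geoInterval (boxProdPi T) u v ↔ ∀ i, x i ∈ geoInterval (T i) (u i) (v i) := by
  constructor
  · intro hx i
    have hx' : (boxProdPi T).dist u v = (boxProdPi T).dist u x + (boxProdPi T).dist x v := hx
    rw [boxProdPi_dist hT, boxProdPi_dist hT, boxProdPi_dist hT, ← Finset.sum_add_distrib] at hx'
    have hle : ∀ j ∈ Finset.univ, (T j).dist (u j) (v j) ≤
        (T j).dist (u j) (x j) + (T j).dist (x j) (v j) := fun j _ => (hT j).dist_triangle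
    by_contra hne
    have hlt : (T i).dist (u i) (v i) < (T i).dist (u i) (x i) + (T i).dist (x i) (v i) :=
      lt_of_le_of_ne (hle i (Finset.mem_univ i)) hne
    have := Finset.sum_lt_sum hle ⟨i, Finset.mem_univ i, hlt⟩
    omega
  · intro h
    show (boxProdPi T).dist u v = (boxProdPi T).dist u x + (boxProdPi T).dist x v
    rw [boxProdPi_dist hT, boxProdPi_dist hT, boxProdPi_dist hT, ← Finset.sum_add_distrib]
    exact Finset.sum_congr rfl fun i _ => h i


lemma boxProdPi_median {ι : Type} [Fintype ι] [DecidableEq ι] {B : ι → Type}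
    {T : ∀ i, SimpleGraph (B i)} (hTree : ∀ i, (T i).IsTree) :
    MedianGraph (boxProdPi T) := by
  have hT : ∀ i, (T i).Connected := fun i => (hTree i).isConnected
  refine ⟨boxProdPi_connected hT, fun u v w => ?_⟩
  choose m hm using fun i => tree_median (hTree i) (u i) (v i) (w i)
  refine ⟨m, ⟨⟨?_, ?_⟩, ?_⟩, ?_⟩
  · exact (boxProdPi_interval hT).mpr fun i => (hm i).1.1.1
  · exact (boxProdPi_interval hT).mpr fun i => (hm i).1.1.2
  · exact (boxProdPi_interval hT).mpr fun i => (hm i).1.2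
  · rintro y ⟨⟨hy1, hy2⟩, hy3⟩
    funext i
    exact (hm i).2 (y i) ⟨⟨(boxProdPi_interval hT).mp hy1 i,
      (boxProdPi_interval hT).mp hy2 i⟩, (boxProdPi_interval hT).mp hy3 i⟩

end Products
end TMD6

/-- From a non-edge-separating family of `k` tree-decompositions of `G`
one obtains a complete `k'`-tree-median-decomposition of `G` for some `k' ≤ k`;
in particular `tmd G ≤ k`. -/
theorem stmt_6 {V : Type} [Fintype V] (G : SimpleGraph V) (k : ℕ) (hk : 0 < k)
    (B : Fin k → Type) (Bfin : ∀ i, Fintype (B i))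
    (T : ∀ i, SimpleGraph (B i)) (β : ∀ i, B i → Set V)
    (hTD : ∀ i, IsTreeDecomp G (T i) (β i))
    (hsep : ∀ u v : V, u ≠ v → ¬ G.Adj u v →
      ∃ i, ∀ t, ¬ (u ∈ β i t ∧ v ∈ β i t)) :
    (∃ k' ≤ k, HasCompleteTMD G k') ∧ tmd G ≤ k := by
  classical
  have hconn : ∀ i, (T i).Connected := fun i => (hTD i).isTree.isConnected
  have hTMD : HasCompleteTMD G k := by
    refine ⟨∀ i, B i, by infer_instance, boxProdPi T,
      fun x => {v | ∀ i, v ∈ β i (x i)},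
      TMD6.boxProdPi_median (fun i => (hTD i).isTree),
      ⟨B, Bfin, T, fun i => (hTD i).isTree, id, fun u v => rfl⟩, ?_, ?_, ?_⟩
    · intro v
      constructor
      · choose t ht using fun i => (hTD i).exists_bag v
        exact ⟨t, ht⟩
      · intro a ha b hb x hx
        have hxi := (TMD6.boxProdPi_interval hconn).1 hx
        intro i
        exact TMD6.convex_of_induce_connected (hTD i).isTree
          ((hTD i).support_connected v) (a i) (ha i) (b i) (hb i) (hxi i)
    · intro u v huv
      choose t ht using fun i => (hTD i).adj_bag huv
      exact ⟨t, fun i => (ht i).1, fun i => (ht i).2⟩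
    · intro x u hu v hv hne
      by_contra hadj
      obtain ⟨i, hi⟩ := hsep u v hne hadj
      exact hi (x i) ⟨hu i, hv i⟩
  exact ⟨⟨k, le_refl k, hTMD⟩, Nat.sInf_le ⟨hk, hTMD⟩⟩
end

section
/- Let G be a finite connected graph with at least one vertex and let k be a positive integer with pw(G) ≤ k. Then there exists an induced path Q in G (with at least one vertex) such that the graph G − V(Q) obtained by deleting the vertices of Q satisfies pw(G − V(Q)) ≤ k − 1 (vacuously if G − V(Q) has no vertices). -/
open SimpleGraph

section Aux

open SimpleGraph

private lemma walk_take {V : Type} {G : SimpleGraph V} {u v : V} (p : G.Walk u v) (i : ℕ) :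
    ∃ q : G.Walk u (p.getVert i), q.length = min i p.length := by
  induction p generalizing i with
  | nil => exact ⟨Walk.nil, by simp⟩
  | cons h p ih =>
    cases i with
    | zero => exact ⟨Walk.nil, rfl⟩
    | succ i =>
      obtain ⟨q, hq⟩ := ih i
      exact ⟨Walk.cons h q, by simp [hq]⟩

private lemma walk_drop {V : Type} {G : SimpleGraph V} {u v : V} (p : G.Walk u v) (j : ℕ) :
    ∃ r : G.Walk (p.getVert j) v, r.length = p.length - j := by
  induction p generalizing j with
  | nil => exact ⟨Walk.nil, by simp⟩
  | cons h p ih =>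
    cases j with
    | zero => exact ⟨Walk.cons h p, rfl⟩
    | succ j =>
      obtain ⟨r, hr⟩ := ih j
      exact ⟨r, by simp [hr]⟩

private lemma shortest_inj {V : Type} {G : SimpleGraph V} {u v : V} {p : G.Walk u v}
    (hp : p.length = G.dist u v) {i j : ℕ} (hij : i < j) (hj : j ≤ p.length)
    (heq : p.getVert i = p.getVert j) : False := by
  obtain ⟨q, hq⟩ := walk_take p i
  obtain ⟨r, hr⟩ := walk_drop p j
  have := G.dist_le (q.append (r.copy heq.symm rfl))
  simp [hq, hr] at this
  omega

private lemma shortest_adj {V : Type} {G : SimpleGraph V} {u v : V} {p : G.Walk u v}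
    (hp : p.length = G.dist u v) {i j : ℕ} (hij : i < j) (hj : j ≤ p.length)
    (hadj : G.Adj (p.getVert i) (p.getVert j)) : j = i + 1 := by
  by_contra hne
  obtain ⟨q, hq⟩ := walk_take p i
  obtain ⟨r, hr⟩ := walk_drop p j
  have := G.dist_le (q.append (Walk.cons hadj r))
  simp [hq, hr] at this
  omega

private lemma pathGraph_walk_interval {n : ℕ} {S : Set (Fin n)}
    {x y : ↥S} (w : ((SimpleGraph.pathGraph n).induce S).Walk x y) :
    ∀ t : Fin n, ((x : Fin n) ≤ t ∧ t ≤ (y : Fin n)) ∨ ((y : Fin n) ≤ t ∧ t ≤ (x : Fin n)) →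
      t ∈ S := by
  induction w with
  | nil =>
    rename_i z
    intro t ht
    have : t = (z : Fin n) := by
      rcases ht with ⟨h1, h2⟩ | ⟨h1, h2⟩ <;> exact le_antisymm h2 h1
    exact this ▸ z.2
  | cons h w ih =>
    rename_i z z' yend
    intro t ht
    have hadj : (SimpleGraph.pathGraph n).Adj z z' := h
    rw [SimpleGraph.pathGraph_adj] at hadj
    by_cases hz : t = (z : Fin n)
    · exact hz ▸ z.2
    · apply ih t
      have h1 : (t : ℕ) ≠ (z : Fin n).val := fun hh => hz (Fin.ext hh)
      simp only [Fin.le_def] at ht ⊢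
      omega

private lemma bag_hit {V : Type} {G : SimpleGraph V} {n : ℕ} (b : Fin n → Set V)
    (hint : ∀ v : V, ∀ a c t : Fin n, v ∈ b a → v ∈ b c → a ≤ t → t ≤ c → v ∈ b t)
    (hadj : ∀ ⦃x y : V⦄, G.Adj x y → ∃ i, x ∈ b i ∧ y ∈ b i)
    {u v : V} {t : Fin n} (w : G.Walk u v) :
    ∀ a c : Fin n, u ∈ b a → v ∈ b c → a ≤ t → t ≤ c → ∃ x ∈ w.support, x ∈ b t := by
  induction w with
  | nil =>
    intro a c hu hv hat htc
    exact ⟨_, by simp, hint _ a c t hu hv hat htc⟩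
  | cons h w ih =>
    intro a c hu hv hat htc
    obtain ⟨i, hx, hy⟩ := hadj h
    rcases le_total t i with hti | hit
    · exact ⟨_, by simp, hint _ a i t hu hx hat hti⟩
    · obtain ⟨x, hxs, hxt⟩ := ih i c hy hv hit htc
      exact ⟨x, by simp [hxs], hxt⟩

end Aux

/-- Every nonempty connected graph of path-width at most `k` contains an
induced path whose deletion leaves a graph of path-width at most `k - 1`. -/
theorem stmt_16 {V : Type} [Fintype V] [Nonempty V] (G : SimpleGraph V)
    (hconn : G.Connected) (k : ℕ) (hk : 0 < k) (hpw : PathwidthLE G k) :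
    ∃ S : Set V, S.Nonempty ∧
      (∃ n : ℕ, Nonempty (G.induce S ≃g SimpleGraph.pathGraph n)) ∧
      PathwidthLE (G.induce (Sᶜ : Set V)) (k - 1) := by
  classical
  obtain ⟨B, fB, P, β, ⟨n, ⟨e⟩⟩, td, hsize⟩ := hpw
  set b : Fin n → Set V := fun i => β (e.symm i) with hbdef
  -- interval property of supports
  have hint : ∀ v : V, ∀ a c t : Fin n, v ∈ b a → v ∈ b c → a ≤ t → t ≤ c → v ∈ b t := by
    intro v a c t ha hc hat htc
    have hconn' := td.support_connected v
    let f : (P.induce {t | v ∈ β t}) →g ((SimpleGraph.pathGraph n).induce {i : Fin n | v ∈ b i}) :=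
      { toFun := fun s => ⟨e ↑s, by
          simp only [Set.mem_setOf_eq, hbdef, e.symm_apply_apply]
          exact s.2⟩,
        map_rel' := by
          intro s s' h
          exact e.map_adj_iff.mpr h }
    have hsurj : Function.Surjective f := by
      rintro ⟨i, hi⟩
      refine ⟨⟨e.symm i, hi⟩, ?_⟩
      apply Subtype.ext
      exact e.apply_symm_apply i
    have hconn2 : ((SimpleGraph.pathGraph n).induce {i : Fin n | v ∈ b i}).Connected :=
      hconn'.map f hsurj
    obtain ⟨w⟩ := hconn2.preconnected ⟨a, ha⟩ ⟨c, hc⟩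
    exact pathGraph_walk_interval w t (Or.inl ⟨hat, htc⟩)
  have hadjFin : ∀ ⦃x y : V⦄, G.Adj x y → ∃ i, x ∈ b i ∧ y ∈ b i := by
    intro x y hxy
    obtain ⟨s, h1, h2⟩ := td.adj_bag hxy
    exact ⟨e s, by simp [hbdef, e.symm_apply_apply, h1, h2]⟩
  -- choose endpoints
  let N : Finset (Fin n) := Finset.univ.filter fun i => (b i).Nonempty
  have hNne : N.Nonempty := by
    obtain ⟨v⟩ := ‹Nonempty V›
    obtain ⟨s, hs⟩ := td.exists_bag v
    exact ⟨e s, Finset.mem_filter.mpr ⟨Finset.mem_univ _,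
      ⟨v, by simp [hbdef, e.symm_apply_apply, hs]⟩⟩⟩
  obtain ⟨u, hu⟩ : (b (N.min' hNne)).Nonempty :=
    (Finset.mem_filter.mp (N.min'_mem hNne)).2
  obtain ⟨v0, hv0⟩ : (b (N.max' hNne)).Nonempty :=
    (Finset.mem_filter.mp (N.max'_mem hNne)).2
  obtain ⟨w, hw⟩ := hconn.exists_walk_length_eq_dist u v0
  set S : Set V := {x | x ∈ w.support} with hSdef
  -- every nonempty bag is hit by the path
  have hhit : ∀ s : B, (β s).Nonempty → ∃ x ∈ w.support, x ∈ β s := by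
    intro s hsne
    have hbs : b (e s) = β s := by simp [hbdef, e.symm_apply_apply]
    have hiN : e s ∈ N := Finset.mem_filter.mpr ⟨Finset.mem_univ _, by rw [hbs]; exact hsne⟩
    have h1 : N.min' hNne ≤ e s := N.min'_le _ hiN
    have h2 : e s ≤ N.max' hNne := N.le_max' _ hiN
    obtain ⟨x, hx1, hx2⟩ := bag_hit b hint hadjFin w _ _ hu hv0 h1 h2
    exact ⟨x, hx1, hbs ▸ hx2⟩
  refine ⟨S, ⟨u, w.start_mem_support⟩, ⟨w.length + 1, ⟨?_⟩⟩, ?_⟩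
  · -- the induced path is isomorphic to a path graph
    have hgmem : ∀ i : Fin (w.length + 1), w.getVert ↑i ∈ S := by
      intro i
      rw [hSdef, Set.mem_setOf_eq, SimpleGraph.Walk.mem_support_iff_exists_getVert]
      exact ⟨i, rfl, by omega⟩
    let g : Fin (w.length + 1) → ↥S := fun i => ⟨w.getVert ↑i, hgmem i⟩
    have hbij : Function.Bijective g := by
      constructor
      · intro i j hij
        by_contra hne
        have hval : (i : ℕ) ≠ (j : ℕ) := fun hh => hne (Fin.ext hh)
        have heq : w.getVert ↑i = w.getVert ↑j := congrArg Subtype.val hij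
        rcases Nat.lt_or_ge (i : ℕ) (j : ℕ) with hlt | hge
        · exact shortest_inj hw hlt (by omega) heq
        · exact shortest_inj hw (by omega) (by omega) heq.symm
      · rintro ⟨x, hx⟩
        rw [hSdef, Set.mem_setOf_eq, SimpleGraph.Walk.mem_support_iff_exists_getVert] at hx
        obtain ⟨m, hm1, hm2⟩ := hx
        exact ⟨⟨m, by omega⟩, Subtype.ext hm1⟩
    have hiso : SimpleGraph.pathGraph (w.length + 1) ≃g G.induce S := by
      refine { toEquiv := Equiv.ofBijective g hbij, map_rel_iff' := @fun i j => ?_ }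
      show (G.induce S).Adj (g i) (g j) ↔ _
      constructor
      · intro hadj
        have hadj' : G.Adj (w.getVert ↑i) (w.getVert ↑j) := hadj
        rw [SimpleGraph.pathGraph_adj]
        rcases lt_trichotomy (i : ℕ) (j : ℕ) with hlt | heq | hgt
        · left
          have := shortest_adj hw hlt (by omega) hadj'
          omega
        · exact absurd (congrArg w.getVert heq ▸ hadj') (G.irrefl)
        · right
          have := shortest_adj hw hgt (by omega) hadj'.symm
          omega
      · intro hadj
        rw [SimpleGraph.pathGraph_adj] at hadj
        show G.Adj (w.getVert ↑i) (w.getVert ↑j)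
        rcases hadj with h1 | h1
        · have := w.adj_getVert_succ (i := (i : ℕ)) (by omega)
          rwa [h1] at this
        · have := w.adj_getVert_succ (i := (j : ℕ)) (by omega)
          rw [h1] at this
          exact this.symm
    exact hiso.symm
  · -- pathwidth of the complement
    refine ⟨B, fB, P, fun s => {x : ↥(Sᶜ : Set V) | ↑x ∈ β s}, ⟨n, ⟨e⟩⟩, ?_, ?_⟩
    · constructor
      · exact td.isTree
      · intro x
        exact td.exists_bag ↑x
      · intro x y hxy
        exact td.adj_bag hxy
      · intro x
        exact td.support_connected ↑x
    · intro s
      show ((Subtype.val : ↥(Sᶜ : Set V) → V) ⁻¹' (β s)).ncard ≤ k - 1 + 1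
      have heq2 : ((Subtype.val : ↥(Sᶜ : Set V) → V) ⁻¹' (β s)).ncard
          = ((Sᶜ : Set V) ∩ β s).ncard := by
        rw [← Subtype.image_preimage_coe]
        exact (Set.ncard_image_of_injective _ Subtype.val_injective).symm
      rw [heq2]
      rcases (β s).eq_empty_or_nonempty with hemp | hne
      · simp [hemp]
      · obtain ⟨x, hx1, hx2⟩ := hhit s hne
        have hsub : (Sᶜ : Set V) ∩ β s ⊆ (β s) \ {x} := by
          intro y ⟨hy1, hy2⟩
          refine ⟨hy2, ?_⟩
          intro hyx
          exact hy1 (by rw [Set.mem_singleton_iff] at hyx; rw [hyx]; exact hx1)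
        have h3 : ((Sᶜ : Set V) ∩ β s).ncard ≤ ((β s) \ {x}).ncard :=
          Set.ncard_le_ncard hsub (Set.toFinite _)
        have h4 : ((β s) \ {x}).ncard = (β s).ncard - 1 :=
          Set.ncard_diff_singleton_of_mem hx2
        have h5 := hsize s
        omega
end

section
/- Let G be a finite simple graph with at least one vertex and let k be a positive integer. Then χ(G) ≤ k if and only if chor(G · K₂ᶜ) ≤ k, where G · K₂ᶜ is the lexicographic product of G with the edgeless graph on two vertices. -/
open SimpleGraph

section Aux

open Fin.CommRing

lemma fin3val' {m : ℕ} : ((3:Fin (m+4)) : ℕ) = 3 := by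
  have h : ((3:Fin (m+4)) : ℕ) = 3 % (m+4) := rfl
  rw [h, Nat.mod_eq_of_lt (by omega)]

lemma fin2val' {m : ℕ} : ((2:Fin (m+4)) : ℕ) = 2 := by
  have h : ((2:Fin (m+4)) : ℕ) = 2 % (m+4) := rfl
  rw [h, Nat.mod_eq_of_lt (by omega)]

lemma cyc_adj_succ' {m : ℕ} (a : Fin (m+4)) : (cycleGraph (m+4)).Adj a (a+1) := by
  rw [cycleGraph_adj']
  right
  simp [add_sub_cancel_left]

lemma fin_ne_add_two' {m : ℕ} (a : Fin (m+4)) : a ≠ a + 2 := by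
  intro h
  have h2 : (2 : Fin (m+4)) = 0 := by linear_combination -h
  have := congrArg Fin.val h2
  rw [fin2val'] at this
  simp at this

lemma cyc_not_adj_two' {m : ℕ} (a : Fin (m+4)) : ¬ (cycleGraph (m+4)).Adj a (a+2) := by
  rw [cycleGraph_adj']
  push_neg
  constructor
  · have h1 : a - (a+2) = -2 := by ring
    rw [h1]
    intro h
    have h2 : (-2 : Fin (m+4)) = 1 := Fin.ext (by simpa using h)
    have h3 : (0:Fin (m+4)) = 3 := by linear_combination h2
    have h4 := congrArg Fin.val h3
    rw [fin3val'] at h4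
    simp at h4
  · have h1 : a + 2 - a = 2 := by ring
    rw [h1]
    intro h
    have h2 : (2 : Fin (m+4)) = 1 := Fin.ext (by simpa using h)
    have := congrArg Fin.val h2
    rw [fin2val'] at this
    simp at this

/-- A split graph is chordal. -/
lemma split_chordal' {W : Type} (H : SimpleGraph W) (C : Set W)
    (hC : ∀ x ∈ C, ∀ y ∈ C, x ≠ y → H.Adj x y)
    (hI : ∀ x, x ∉ C → ∀ y, y ∉ C → ¬ H.Adj x y) : Chordal H := by
  intro n hn
  obtain ⟨m, rfl⟩ : ∃ m, n = m + 4 := ⟨n - 4, by omega⟩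
  constructor
  intro f
  have clique2 : ∀ a b : Fin (m+4), b = a + 2 → f a ∈ C → f b ∈ C → False := by
    rintro a b rfl h1 h2
    have hne : f a ≠ f (a+2) := fun h => fin_ne_add_two' a (f.injective h)
    exact cyc_not_adj_two' a (f.map_rel_iff.mp (hC _ h1 _ h2 hne))
  have key : ∀ a b c : Fin (m+4), b = a + 1 → c = a + 2 → f b ∉ C →
      f a ∈ C ∧ f c ∈ C := by
    rintro a b c rfl rfl hb
    constructor
    · by_contra h
      exact hI _ h _ hb (f.map_rel_iff.mpr (cyc_adj_succ' a))
    · by_contra h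
      have hadj : H.Adj (f (a+1)) (f (a+1+1)) := f.map_rel_iff.mpr (cyc_adj_succ' (a+1))
      have e : a + 1 + 1 = a + 2 := by ring
      rw [e] at hadj
      exact hI _ hb _ h hadj
  by_cases h1 : f 1 ∈ C
  · by_cases h3 : f 3 ∈ C
    · exact clique2 1 3 (by ring) h1 h3
    · obtain ⟨hA, hB⟩ := key 2 3 4 (by ring) (by ring) h3
      exact clique2 2 4 (by ring) hA hB
  · obtain ⟨hA, hB⟩ := key 0 1 2 (by ring) (by ring) h1
    exact clique2 0 2 (by ring) hA hB

lemma c4_false' {W : Type} (H : SimpleGraph W) (hH : Chordal H) {a b c d : W}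
    (hac : a ≠ c) (hbd : b ≠ d)
    (hab : H.Adj a b) (hbc : H.Adj b c) (hcd : H.Adj c d) (hda : H.Adj d a)
    (nac : ¬H.Adj a c) (nbd : ¬H.Adj b d) : False := by
  have n1 : a ≠ b := hab.ne
  have n2 : b ≠ c := hbc.ne
  have n3 : c ≠ d := hcd.ne
  have n4 : d ≠ a := hda.ne
  have hba := hab.symm; have hcb := hbc.symm; have hdc := hcd.symm; have had := hda.symm
  have nca : ¬H.Adj c a := fun h => nac h.symm
  have ndb : ¬H.Adj d b := fun h => nbd h.symm
  refine (hH 4 le_rfl).false ⟨⟨![a,b,c,d], ?_⟩, ?_⟩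
  · intro i j hij
    fin_cases i <;> fin_cases j <;> simp_all
  · intro i j
    show H.Adj (![a,b,c,d] i) (![a,b,c,d] j) ↔ _
    fin_cases i <;> fin_cases j <;>
      simp_all [cycleGraph_adj', Fin.ext_iff] <;> decide

lemma lexProd_bot_adj {V : Type} (G : SimpleGraph V) (x y : V × Fin 2) :
    (lexProd G (⊥ : SimpleGraph (Fin 2))).Adj x y ↔ G.Adj x.1 y.1 := by
  constructor
  · rintro (h | ⟨-, h⟩)
    · exact h
    · exact h.elim
  · exact Or.inl

lemma mem_of_colorable' {V : Type} [Fintype V] (G : SimpleGraph V) {m : ℕ}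
    (hm : 0 < m) (hc : G.Colorable m) :
    m ∈ {k | 0 < k ∧ ∃ H : Fin k → SimpleGraph (V × Fin 2), (∀ i, Chordal (H i)) ∧
      ∀ u v : V × Fin 2,
        (lexProd G (⊥ : SimpleGraph (Fin 2))).Adj u v ↔ ∀ i, (H i).Adj u v} := by
  obtain ⟨c⟩ := hc
  refine ⟨hm, fun i =>
    { Adj := fun x y => x ≠ y ∧ (G.Adj x.1 y.1 ∨ (c x.1 ≠ i ∧ c y.1 ≠ i))
      symm := by
        constructor
        rintro x y ⟨hne, h | ⟨h1, h2⟩⟩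
        · exact ⟨hne.symm, Or.inl h.symm⟩
        · exact ⟨hne.symm, Or.inr ⟨h2, h1⟩⟩
      loopless := by constructor; rintro x ⟨hne, -⟩; exact hne rfl }, ?_, ?_⟩
  · intro i
    apply split_chordal' _ {x : V × Fin 2 | c x.1 ≠ i}
    · intro x hx y hy hne
      exact ⟨hne, Or.inr ⟨hx, hy⟩⟩
    · rintro x hx y hy ⟨hne, h | ⟨h1, -⟩⟩
      · simp only [Set.mem_setOf_eq, not_not] at hx hy
        exact c.valid h (hx.trans hy.symm)
      · exact h1 (by simpa using hx)
  · intro x y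
    constructor
    · intro h i
      have hG : G.Adj x.1 y.1 := (lexProd_bot_adj G x y).mp h
      exact ⟨fun he => hG.ne (congrArg Prod.fst he), Or.inl hG⟩
    · intro h
      obtain ⟨hne, h' | ⟨h1, -⟩⟩ := h (c x.1)
      · exact (lexProd_bot_adj G x y).mpr h'
      · exact absurd rfl h1

lemma colorable_of_mem' {V : Type} [Fintype V] (G : SimpleGraph V) {m : ℕ}
    (hmem : m ∈ {k | 0 < k ∧ ∃ H : Fin k → SimpleGraph (V × Fin 2), (∀ i, Chordal (H i)) ∧
      ∀ u v : V × Fin 2,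
        (lexProd G (⊥ : SimpleGraph (Fin 2))).Adj u v ↔ ∀ i, (H i).Adj u v}) :
    G.Colorable m := by
  obtain ⟨hm, H, hch, hiff⟩ := hmem
  have hx : ∀ u : V, ∃ i, ¬ (H i).Adj (u, 0) (u, 1) := by
    intro u
    by_contra h
    push_neg at h
    have : (lexProd G (⊥ : SimpleGraph (Fin 2))).Adj (u, 0) (u, 1) :=
      (hiff _ _).mpr (by simpa using h)
    exact G.irrefl ((lexProd_bot_adj G _ _).mp this)
  choose col hcol using hx
  refine ⟨SimpleGraph.Coloring.mk col ?_⟩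
  intro u v hadj hcc
  have eadj : ∀ (w z : V) (a b : Fin 2), G.Adj w z → (H (col u)).Adj (w, a) (z, b) := by
    intro w z a b hwz
    exact (hiff _ _).mp ((lexProd_bot_adj G _ _).mpr hwz) (col u)
  refine c4_false' (H (col u)) (hch (col u))
    (a := (u, 0)) (b := (v, 0)) (c := (u, 1)) (d := (v, 1))
    (by simp) (by simp)
    (eadj u v 0 0 hadj) (eadj v u 0 1 hadj.symm) (eadj u v 1 1 hadj)
    (eadj v u 1 0 hadj.symm)
    (hcol u) ?_
  rw [hcc]
  exact hcol v

end Aux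

/-- `χ(G) ≤ k` iff the lexicographic product of `G` with the edgeless graph
on two vertices has chordality at most `k`. -/
theorem stmt_19 {V : Type} [Fintype V] [Nonempty V] (G : SimpleGraph V)
    (k : ℕ) (hk : 0 < k) :
    G.chromaticNumber ≤ (k : ℕ∞) ↔
      chor (lexProd G (⊥ : SimpleGraph (Fin 2))) ≤ k := by
  rw [SimpleGraph.chromaticNumber_le_iff_colorable]
  unfold chor
  constructor
  · intro h
    exact Nat.sInf_le (mem_of_colorable' G hk h)
  · intro h
    have hne : ({k | 0 < k ∧ ∃ H : Fin k → SimpleGraph (V × Fin 2), (∀ i, Chordal (H i)) ∧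
        ∀ u v : V × Fin 2,
          (lexProd G (⊥ : SimpleGraph (Fin 2))).Adj u v ↔ ∀ i, (H i).Adj u v}).Nonempty :=
      ⟨Fintype.card V, mem_of_colorable' G Fintype.card_pos G.colorable_of_fintype⟩
    have hmem := Nat.sInf_mem hne
    exact (colorable_of_mem' G hmem).mono h
end
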